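/- For all integers p ≥ 1, t ≥ 1 and n_1, …, n_p ≥ 1, the eternal cop number of the strong product of paths satisfies (∏_{i=1}^p n_i)/(2t+1)^p ≤ c_t^∞(P_{n_1} ⊠ ⋯ ⊠ P_{n_p}) ≤ ∏_{i=1}^p ⌈n_i/(t+1)⌉, where the lower bound is an inequality of rational numbers. -/

import Mathlib

open SimpleGraph

/-- `c'` is a one-step move of the `k` cops from configuration `c` in `G`:
each cop stays put or moves to an adjacent vertex. -/
def OneStepMove {V : Type*} (G : SimpleGraph V) {k : ℕ} (c c' : Fin k → V) : Prop :=
  ∀ i, c' i = c i ∨ G.Adj (c i) (c' i)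

/-- The capture predicate `Cap G T s c r`: from cop configuration `c`, with the robber at `r`,
the cops can capture the robber within `s` time-steps, ending in a configuration in `T`. -/
def Cap {V : Type*} (G : SimpleGraph V) {k : ℕ} (T : Set (Fin k → V)) :
    ℕ → (Fin k → V) → V → Prop
  | 0, _, _ => False
  | s + 1, c, r => ∃ c', OneStepMove G c c' ∧
      (((∃ i, c' i = r) ∧ c' ∈ T) ∨
        ∀ r', (r' = r ∨ G.Adj r r') →
          (((∃ i, c' i = r') ∧ c' ∈ T) ∨ Cap G T s c' r'))

/-- `k` cops can win a single play on `G` within `t` time-steps. -/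
def TimedWin {V : Type*} (G : SimpleGraph V) (k t : ℕ) : Prop :=
  ∃ c : Fin k → V, ∀ r : V,
    (∃ i, c i = r) ∨ Cap G (Set.univ : Set (Fin k → V)) t c r

/-- The `t`-capture cop number `c_t(G)`. -/
noncomputable def captureCopNumber {V : Type*} (G : SimpleGraph V) (t : ℕ) : ℕ :=
  sInf {k | 1 ≤ k ∧ TimedWin G k t}

/-- `k` cops can win the eternal game on `G`, capturing each robber within `t` time-steps. -/
def EternalWin {V : Type*} (G : SimpleGraph V) (k t : ℕ) : Prop :=
  ∃ T : Set (Fin k → V), T.Nonempty ∧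
    ∀ c ∈ T, ∀ r : V, (∃ i, c i = r) ∨ Cap G T t c r

/-- The eternal cop number `c_t^∞(G)`. -/
noncomputable def eternalCopNumber {V : Type*} (G : SimpleGraph V) (t : ℕ) : ℕ :=
  sInf {k | 1 ≤ k ∧ EternalWin G k t}

/-- The cop number `c(G)`. -/
noncomputable def copNumber {V : Type*} (G : SimpleGraph V) : ℕ :=
  sInf {k | ∃ t, 1 ≤ t ∧ captureCopNumber G t ≤ k}

/-- `ℓ_i = ⌈(1 - 2^{-i}) t - 1/2⌉`. -/
def ell (t i : ℕ) : ℕ :=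
  (⌈((1 : ℚ) - 2 ^ (-(i : ℤ))) * (t : ℚ) - 1 / 2⌉).toNat

/-- The subgraph of `G` induced by `W` is a retract of `G`. -/
def IsRetract {V : Type*} (G : SimpleGraph V) (W : Set V) : Prop :=
  ∃ f : V → V, (∀ v, f v ∈ W) ∧ (∀ w ∈ W, f w = w) ∧
    ∀ u v, G.Adj u v → f u = f v ∨ G.Adj (f u) (f v)

/-- The radius of a graph. -/
noncomputable def graphRadius {V : Type*} (G : SimpleGraph V) : ℕ :=
  sInf {r | ∃ v, ∀ u, G.dist v u ≤ r}

/-- The strong product of a family of graphs. -/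
def strongProdPi {p : ℕ} {V : Fin p → Type*} (H : ∀ i, SimpleGraph (V i)) :
    SimpleGraph (∀ i, V i) where
  Adj x y := x ≠ y ∧ ∀ i, x i = y i ∨ (H i).Adj (x i) (y i)
  symm := by
    constructor
    rintro x y ⟨hne, h⟩
    exact ⟨hne.symm, fun i => (h i).imp Eq.symm SimpleGraph.Adj.symm⟩
  loopless := by
    constructor
    rintro x ⟨hne, -⟩
    exact hne rfl

namespace Helper16

def phi (a b x y : ℕ) : ℕ :=
  if x ≤ y + 1 ∧ y ≤ x + 1 then 0 else if x < y then b - x else x - a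

def chase (a b x y : ℕ) : ℕ :=
  if x < max a (min y b) then x + 1 else if max a (min y b) < x then x - 1 else x

lemma chase_mem {a b x y : ℕ} (hax : a ≤ x) (hxb : x ≤ b) :
    a ≤ chase a b x y ∧ chase a b x y ≤ b := by
  simp only [chase]; split_ifs <;> omega

lemma chase_step (a b x y : ℕ) :
    chase a b x y = x ∨ chase a b x y = x + 1 ∨ x = chase a b x y + 1 := by
  simp only [chase]; split_ifs <;> omega

lemma phi_le {a b x y : ℕ} (hax : a ≤ x) (hxb : x ≤ b) : phi a b x y ≤ b - a := by
  simp only [phi]; split_ifs <;> omega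

lemma phi_box_eq_zero {a b x y : ℕ} (hay : a ≤ y) (hyb : y ≤ b)
    (h : phi a b x y ≤ 1) : phi a b x y = 0 := by
  simp only [phi] at *; split_ifs at * <;> omega

lemma chase_capture {a b x y : ℕ} (hax : a ≤ x) (hxb : x ≤ b) (hay : a ≤ y) (hyb : y ≤ b)
    (h : phi a b x y = 0) : chase a b x y = y := by
  simp only [phi] at h; simp only [chase]; split_ifs at * <;> omega

lemma phi_decrease {a b x y y' : ℕ} (hax : a ≤ x) (hxb : x ≤ b)
    (hy : y' = y ∨ y' = y + 1 ∨ y = y' + 1) :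
    phi a b (chase a b x y) y' ≤ phi a b x y - 1 := by
  simp only [phi, chase]; split_ifs <;> omega

variable {p : ℕ}

def lo (t q : ℕ) : ℕ := (t + 1) * q
def hi (t ni q : ℕ) : ℕ := min ((t + 1) * q + t) (ni - 1)

def TT (t : ℕ) (n m : Fin p → ℕ) {K : ℕ} (e : Fin K → ∀ i, Fin (m i)) :
    Set (Fin K → ∀ i, Fin (n i)) :=
  {c | ∀ a i, lo t (e a i) ≤ (c a i : ℕ) ∧ (c a i : ℕ) ≤ hi t (n i) (e a i)}

def nextC (t : ℕ) (n m : Fin p → ℕ) (hn : ∀ i, 1 ≤ n i) {K : ℕ}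
    (e : Fin K → ∀ i, Fin (m i)) (c : Fin K → ∀ i, Fin (n i))
    (hc : c ∈ TT t n m e) (r : ∀ i, Fin (n i)) : Fin K → ∀ i, Fin (n i) :=
  fun a i => ⟨chase (lo t (e a i)) (hi t (n i) (e a i)) (c a i) (r i), by
    have h := chase_mem (y := (r i : ℕ)) (hc a i).1 (hc a i).2
    have := hn i
    have h2 : hi t (n i) (e a i) ≤ n i - 1 := min_le_right _ _
    omega⟩

lemma nextC_mem (t : ℕ) (n m : Fin p → ℕ) (hn : ∀ i, 1 ≤ n i) {K : ℕ}
    (e : Fin K → ∀ i, Fin (m i)) (c : Fin K → ∀ i, Fin (n i))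
    (hc : c ∈ TT t n m e) (r : ∀ i, Fin (n i)) :
    nextC t n m hn e c hc r ∈ TT t n m e :=
  fun a i => chase_mem (y := (r i : ℕ)) (hc a i).1 (hc a i).2

lemma nextC_oneStep (t : ℕ) (n m : Fin p → ℕ) (hn : ∀ i, 1 ≤ n i) {K : ℕ}
    (e : Fin K → ∀ i, Fin (m i)) (c : Fin K → ∀ i, Fin (n i))
    (hc : c ∈ TT t n m e) (r : ∀ i, Fin (n i)) :
    OneStepMove (strongProdPi fun i => SimpleGraph.pathGraph (n i)) c
      (nextC t n m hn e c hc r) := by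
  intro a
  by_cases h : nextC t n m hn e c hc r a = c a
  · exact Or.inl h
  · refine Or.inr ⟨fun h' => h h'.symm, fun i => ?_⟩
    rcases chase_step (lo t (e a i)) (hi t (n i) (e a i)) (c a i) (r i) with h1 | h1 | h1
    · exact Or.inl (Fin.ext h1.symm)
    · exact Or.inr (pathGraph_adj.mpr (Or.inl h1.symm))
    · exact Or.inr (pathGraph_adj.mpr (Or.inr h1.symm))

lemma robber_step {n : Fin p → ℕ} {r r' : ∀ i, Fin (n i)}
    (h : r' = r ∨ (strongProdPi fun i => SimpleGraph.pathGraph (n i)).Adj r r') (i : Fin p) :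
    (r' i : ℕ) = r i ∨ (r' i : ℕ) = r i + 1 ∨ (r i : ℕ) = r' i + 1 := by
  rcases h with rfl | ⟨-, h⟩
  · exact Or.inl rfl
  · rcases h i with h | h
    · exact Or.inl (congrArg Fin.val h).symm
    · rcases pathGraph_adj.mp h with h | h
      · exact Or.inr (Or.inl h.symm)
      · exact Or.inr (Or.inr h.symm)

def box (t : ℕ) {n m : Fin p → ℕ} (hnm : ∀ i, n i ≤ (t + 1) * m i)
    (r : ∀ i, Fin (n i)) : ∀ i, Fin (m i) :=
  fun i => ⟨(r i : ℕ) / (t + 1), by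
    have h1 := (r i).isLt
    have h3 : n i ≤ m i * (t + 1) := by rw [mul_comm]; exact hnm i
    exact (Nat.div_lt_iff_lt_mul (by omega)).mpr (by omega)⟩

lemma box_mem (t : ℕ) {n m : Fin p → ℕ} (hnm : ∀ i, n i ≤ (t + 1) * m i)
    (r : ∀ i, Fin (n i)) (i : Fin p) :
    lo t (box t hnm r i) ≤ (r i : ℕ) ∧ (r i : ℕ) ≤ hi t (n i) (box t hnm r i) := by
  have h1 := Nat.div_add_mod (r i : ℕ) (t + 1)
  have h2 : (r i : ℕ) % (t + 1) < t + 1 := Nat.mod_lt _ (by omega)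
  have h3 := (r i).isLt
  simp only [lo, hi, box]
  omega

lemma cap_lemma (t : ℕ) (n m : Fin p → ℕ) (hn : ∀ i, 1 ≤ n i)
    (hnm : ∀ i, n i ≤ (t + 1) * m i) {K : ℕ} (e : Fin K ≃ ∀ i, Fin (m i)) :
    ∀ s, ∀ c, ∀ hc : c ∈ TT t n m ⇑e, ∀ r : ∀ i, Fin (n i),
      (∀ a i, phi (lo t (e a i)) (hi t (n i) (e a i)) (c a i) (r i) ≤ s + 1) →
      Cap (strongProdPi fun i => SimpleGraph.pathGraph (n i)) (TT t n m ⇑e) (s + 1) c r := by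
  intro s
  induction s with
  | zero =>
    intro c hc r hphi
    refine ⟨nextC t n m hn ⇑e c hc r, nextC_oneStep t n m hn ⇑e c hc r,
      Or.inl ⟨⟨e.symm (box t hnm r), ?_⟩, nextC_mem t n m hn ⇑e c hc r⟩⟩
    funext i
    apply Fin.ext
    show chase _ _ _ _ = _
    have hee : e (e.symm (box t hnm r)) = box t hnm r := e.apply_symm_apply _
    rw [hee]
    have hbm := box_mem t hnm r i
    have hc1 := (hc (e.symm (box t hnm r)) i).1
    have hc2 := (hc (e.symm (box t hnm r)) i).2
    rw [hee] at hc1 hc2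
    refine chase_capture hc1 hc2 hbm.1 hbm.2 ?_
    have := hphi (e.symm (box t hnm r)) i
    rw [hee] at this
    exact phi_box_eq_zero hbm.1 hbm.2 this
  | succ s ih =>
    intro c hc r hphi
    refine ⟨nextC t n m hn ⇑e c hc r, nextC_oneStep t n m hn ⇑e c hc r,
      Or.inr fun r' hr' => Or.inr (ih _ (nextC_mem t n m hn ⇑e c hc r) r' fun a i => ?_)⟩
    have hd := phi_decrease (y' := (r' i : ℕ)) (hc a i).1 (hc a i).2 (robber_step hr' i)
    have := hphi a i
    show phi _ _ (chase _ _ _ _) _ ≤ _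
    omega

lemma eternal_win (t : ℕ) (ht : 1 ≤ t) (n m : Fin p → ℕ) (hn : ∀ i, 1 ≤ n i)
    (hnm : ∀ i, n i ≤ (t + 1) * m i) (hltm : ∀ i, (t + 1) * (m i - 1) < n i)
    (hm : ∀ i, 1 ≤ m i) {K : ℕ} (e : Fin K ≃ ∀ i, Fin (m i)) :
    EternalWin (strongProdPi fun i => SimpleGraph.pathGraph (n i)) K t := by
  have hlo : ∀ (a : Fin K) (i : Fin p), lo t (e a i) < n i := by
    intro a i
    have h1 : (e a i : ℕ) ≤ m i - 1 := by have := (e a i).isLt; omega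
    have h2 : (t + 1) * (e a i : ℕ) ≤ (t + 1) * (m i - 1) := Nat.mul_le_mul_left _ h1
    have := hltm i
    simp only [lo]
    omega
  refine ⟨TT t n m ⇑e, ⟨fun a i => ⟨lo t (e a i), hlo a i⟩, fun a i => ?_⟩, fun c hc r => ?_⟩
  · have := hlo a i
    simp only [lo, hi]
    constructor
    · rfl
    · simp only [lo] at this ⊢
      omega
  · right
    obtain ⟨t', rfl⟩ : ∃ t', t = t' + 1 := ⟨t - 1, by omega⟩
    refine cap_lemma _ n m hn hnm e t' c hc r fun a i => ?_
    have h1 := phi_le (y := (r i : ℕ)) (hc a i).1 (hc a i).2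
    have h2 : hi (t' + 1) (n i) (e a i) - lo (t' + 1) (e a i) ≤ t' + 1 := by
      simp only [lo, hi]; omega
    omega

lemma cap_close (n : Fin p → ℕ) {K : ℕ} (T : Set (Fin K → ∀ i, Fin (n i))) :
    ∀ s (c : Fin K → ∀ i, Fin (n i)) r,
      Cap (strongProdPi fun i => SimpleGraph.pathGraph (n i)) T s c r →
      ∃ a, ∀ i, (r i : ℕ) ≤ (c a i : ℕ) + s ∧ (c a i : ℕ) ≤ (r i : ℕ) + s := by
  intro s
  induction s with
  | zero => intro c r h; exact h.elim
  | succ s ih =>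
    intro c r h
    obtain ⟨c', hmove, hcap⟩ := h
    have hstep : ∀ a i, (c' a i : ℕ) ≤ c a i + 1 ∧ (c a i : ℕ) ≤ c' a i + 1 := by
      intro a i
      rcases hmove a with h | ⟨-, h⟩
      · rw [h]; omega
      · rcases h i with h | h
        · rw [h]; omega
        · rcases pathGraph_adj.mp h with h | h <;> omega
    have hfin : ∀ a, c' a = r →
        ∀ i, (r i : ℕ) ≤ (c a i : ℕ) + (s + 1) ∧ (c a i : ℕ) ≤ (r i : ℕ) + (s + 1) := by
      intro a ha i
      have h1 := hstep a i
      have h2 : (c' a i : ℕ) = r i := by rw [ha]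
      omega
    rcases hcap with ⟨⟨a, ha⟩, -⟩ | hall
    · exact ⟨a, hfin a ha⟩
    · rcases hall r (Or.inl rfl) with ⟨⟨a, ha⟩, -⟩ | hcap'
      · exact ⟨a, hfin a ha⟩
      · obtain ⟨a, hai⟩ := ih c' r hcap'
        exact ⟨a, fun i => by have := hstep a i; have := hai i; omega⟩

lemma card_bound (t : ℕ) (n : Fin p → ℕ) {K : ℕ} (T : Set (Fin K → ∀ i, Fin (n i)))
    (c : Fin K → ∀ i, Fin (n i))
    (h : ∀ r, (∃ a, c a = r) ∨
      Cap (strongProdPi fun i => SimpleGraph.pathGraph (n i)) T t c r) :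
    ∏ i, n i ≤ K * (2 * t + 1) ^ p := by
  classical
  have hex : ∀ r : ∀ i, Fin (n i),
      ∃ a, ∀ i, (r i : ℕ) ≤ (c a i : ℕ) + t ∧ (c a i : ℕ) ≤ (r i : ℕ) + t := by
    intro r
    rcases h r with ⟨a, ha⟩ | hcap
    · refine ⟨a, fun i => ?_⟩
      have h0 : (c a i : ℕ) = r i := by rw [ha]
      omega
    · exact cap_close n T t c r hcap
  let f : (∀ i, Fin (n i)) → Fin K × (∀ i : Fin p, Fin (2 * t + 1)) := fun r =>
    ⟨(hex r).choose, fun i => ⟨(r i : ℕ) + t - ((c ((hex r).choose) i : ℕ)), by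
      have := (hex r).choose_spec i; omega⟩⟩
  have hinj : Function.Injective f := by
    intro r1 r2 hr
    have h1 : (hex r1).choose = (hex r2).choose := congrArg Prod.fst hr
    funext i
    have h2 : ((f r1).2 i : ℕ) = ((f r2).2 i : ℕ) := by rw [hr]
    have s1 := (hex r1).choose_spec i
    have s2 := (hex r2).choose_spec i
    rw [h1] at s1
    simp only [f, h1] at h2
    apply Fin.ext
    omega
  have hcard := Fintype.card_le_of_injective f hinj
  simpa [Fintype.card_pi, Finset.prod_const] using hcard

end Helper16

/-- bounds for the eternal cop number of a strong product of paths. -/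
theorem eternalCopNumber_strongProd_paths (p t : ℕ) (hp : 1 ≤ p) (ht : 1 ≤ t)
    (n : Fin p → ℕ) (hn : ∀ i, 1 ≤ n i) :
    (∏ i, (n i : ℚ)) / (2 * t + 1) ^ p
        ≤ (eternalCopNumber (strongProdPi fun i => SimpleGraph.pathGraph (n i)) t : ℚ) ∧
      eternalCopNumber (strongProdPi fun i => SimpleGraph.pathGraph (n i)) t
        ≤ ∏ i, ⌈(n i : ℚ) / (t + 1)⌉₊ := by
  classical
  have htQ : (0 : ℚ) < (t : ℚ) + 1 := by positivity
  let m : Fin p → ℕ := fun i => ⌈(n i : ℚ) / (t + 1)⌉₊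
  have hm1 : ∀ i, 1 ≤ m i := by
    intro i
    refine Nat.one_le_ceil_iff.mpr (div_pos ?_ htQ)
    exact_mod_cast hn i
  have hnm : ∀ i, n i ≤ (t + 1) * m i := by
    intro i
    have h := Nat.le_ceil ((n i : ℚ) / (t + 1))
    rw [div_le_iff₀ htQ] at h
    have h2 : (n i : ℚ) ≤ (((t + 1) * m i : ℕ) : ℚ) := by push_cast; linarith
    exact_mod_cast h2
  have hltm : ∀ i, (t + 1) * (m i - 1) < n i := by
    intro i
    have hlt : m i - 1 < ⌈(n i : ℚ) / (t + 1)⌉₊ := by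
      show m i - 1 < m i
      have := hm1 i; omega
    have h : ((m i - 1 : ℕ) : ℚ) < (n i : ℚ) / (t + 1) := Nat.lt_ceil.mp hlt
    rw [lt_div_iff₀ htQ] at h
    have h2 : (((t + 1) * (m i - 1) : ℕ) : ℚ) < ((n i : ℕ) : ℚ) := by push_cast; linarith
    exact_mod_cast h2
  have hcard : Fintype.card (∀ i, Fin (m i)) = ∏ i, m i := by
    simp [Fintype.card_pi]
  let e : Fin (∏ i, m i) ≃ ∀ i, Fin (m i) := (Fintype.equivFinOfCardEq hcard).symm
  have hwin := Helper16.eternal_win t ht n m hn hnm hltm hm1 e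
  have hK1 : 1 ≤ ∏ i, m i := Finset.one_le_prod' fun i _ => hm1 i
  have hmem : (∏ i, m i) ∈ {k | 1 ≤ k ∧
      EternalWin (strongProdPi fun i => SimpleGraph.pathGraph (n i)) k t} := ⟨hK1, hwin⟩
  constructor
  · have hmem0 := Nat.sInf_mem ⟨∏ i, m i, hmem⟩
    obtain ⟨-, Tset, hTne, hT⟩ := hmem0
    obtain ⟨c, hc⟩ := hTne
    have hcount := Helper16.card_bound t n Tset c (fun r => hT c hc r)
    rw [div_le_iff₀ (by positivity)]
    rw [eternalCopNumber]
    exact_mod_cast hcount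
  · exact Nat.sInf_le hmem
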